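/- Coverage guarantee for conformalized quantile regression (Algorithm 2, split conformal Quantile-DeepONet regression). Let 𝒳 be a measurable space, let n be a positive natural number, let α ∈ (0,1) be such that ⌈(n+1)(1−α)⌉ ≤ n, let t_lo : 𝒳 → ℝ and t_hi : 𝒳 → ℝ be measurable functions, and let (X₁,Y₁), …, (Xₙ,Yₙ), (X_test, Y_test) be independent and identically distributed random pairs taking values in 𝒳 × ℝ. Define calibration scores sᵢ = max( t_lo(Xᵢ) − Yᵢ , Yᵢ − t_hi(Xᵢ) ) for i = 1, …, n, and let q̂ be the ⌈(n+1)(1−α)⌉-th smallest value among s₁, …, sₙ. Then ℙ( t_lo(X_test) − q̂ ≤ Y_test ≤ t_hi(X_test) + q̂ ) ≥ 1 − α. -/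

import Mathlib

open MeasureTheory ProbabilityTheory
open scoped Classical ENNReal

/-- The `k`-th smallest value (order statistic of rank `k`, 1-indexed) of a list of reals. -/
noncomputable def kthSmallest (l : List ℝ) (k : ℕ) : ℝ :=
  (l.mergeSort (fun a b => a ≤ b)).getD (k - 1) 0

lemma countP_ofFn {m : ℕ} (g : Fin m → ℝ) (p : ℝ → Bool) :
    (List.ofFn g).countP p = (Finset.univ.filter fun i => p (g i)).card := by
  induction m with
  | zero => simp
  | succ m ih =>
    rw [List.ofFn_succ, List.countP_cons, ih (fun i => g i.succ), Finset.card_filter,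
      Finset.card_filter, Fin.sum_univ_succ]
    simp [add_comm]

lemma le_kthSmallest_of_count_lt {l : List ℝ} {k : ℕ} (hk1 : 1 ≤ k) (hk2 : k ≤ l.length)
    {x : ℝ} (h : l.countP (fun a => decide (a < x)) < k) : x ≤ kthSmallest l k := by
  by_contra hlt
  push_neg at hlt
  set l' := l.mergeSort (fun a b => a ≤ b) with hl'
  have hperm : l'.Perm l := List.mergeSort_perm l _
  have hsort : List.Pairwise (· ≤ ·) l' := by
    have := List.pairwise_mergeSort (le := fun a b : ℝ => decide (a ≤ b))
      (fun a b c hab hbc => by simp_all; linarith)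
      (fun a b => by simpa using le_total a b) l
    exact this.imp (fun hab => by simpa using hab)
  have hlen : l'.length = l.length := hperm.length_eq
  have hkl : k - 1 < l'.length := by omega
  have hgd : kthSmallest l k = l'[k-1] := by
    simp only [kthSmallest, ← hl']
    exact List.getD_eq_getElem l' 0 hkl
  have hcnt : l'.countP (fun a => decide (a < x)) = l.countP (fun a => decide (a < x)) :=
    hperm.countP_eq _
  have hbig : k ≤ l'.countP (fun a => decide (a < x)) := by
    have h1 : ∀ (i : ℕ) (hi : i < l'.length), i < k → l'[i] < x := by
      intro i hi hik
      have hle : l'[i] ≤ l'[k-1] := by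
        have := hsort.rel_get_of_le (a := ⟨i, hi⟩) (b := ⟨k-1, hkl⟩) (by simp; omega)
        simpa using this
      calc l'[i] ≤ l'[k-1] := hle
        _ < x := by rw [← hgd]; exact hlt
    have htake : (l'.take k).countP (fun a => decide (a < x)) = (l'.take k).length := by
      rw [List.countP_eq_length]
      intro a ha
      obtain ⟨i, hi, rfl⟩ := List.mem_iff_getElem.1 ha
      rw [List.getElem_take]
      exact decide_eq_true (h1 i (by simp at hi; omega) (by simp at hi; omega))
    have hlt' : (l'.take k).length = k := by rw [List.length_take]; omega
    calc k = (l'.take k).countP (fun a => decide (a < x)) := by rw [htake, hlt']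
      _ ≤ l'.countP (fun a => decide (a < x)) := by
        conv_rhs => rw [← List.take_append_drop k l']
        rw [List.countP_append]
        exact Nat.le_add_right _ _
  omega

lemma rank_count_lemma {m k : ℕ} (hk : k ≤ m) (a : Fin m → ℝ) :
    k ≤ (Finset.univ.filter fun j => (Finset.univ.filter fun i => a i < a j).card < k).card := by
  set R : Fin m → Fin m → Prop := fun i j => a i < a j ∨ (a i = a j ∧ i < j) with hR
  have htrans : ∀ {i j l}, R i j → R j l → R i l := by
    rintro i j l (h | ⟨h1, h2⟩) (h' | ⟨h1', h2'⟩)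
    · exact Or.inl (h.trans h')
    · exact Or.inl (h1' ▸ h)
    · exact Or.inl (h1 ▸ h')
    · exact Or.inr ⟨h1.trans h1', h2.trans h2'⟩
  have hirrefl : ∀ i, ¬ R i i := by
    rintro i (h | ⟨_, h⟩) <;> exact lt_irrefl _ h
  have htotal : ∀ i j, i ≠ j → R i j ∨ R j i := by
    intro i j hij
    rcases lt_trichotomy (a i) (a j) with h | h | h
    · exact Or.inl (Or.inl h)
    · rcases lt_or_gt_of_ne hij with h' | h'
      · exact Or.inl (Or.inr ⟨h, h'⟩)
      · exact Or.inr (Or.inr ⟨h.symm, h'⟩)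
    · exact Or.inr (Or.inl h)
  set f : Fin m → ℕ := fun j => (Finset.univ.filter fun i => R i j).card with hf
  have hflt : ∀ j, f j < m := by
    intro j
    have hss : (Finset.univ.filter fun i => R i j) ⊂ Finset.univ :=
      (Finset.ssubset_iff_of_subset (Finset.subset_univ _)).2
        ⟨j, Finset.mem_univ j, by simp [hirrefl j]⟩
    calc f j < Finset.univ.card := Finset.card_lt_card hss
      _ = m := by rw [Finset.card_univ, Fintype.card_fin]
  have hmono : ∀ i j, R i j → f i < f j := by
    intro i j hij
    have hsub : insert i (Finset.univ.filter fun l => R l i) ⊆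
        Finset.univ.filter fun l => R l j := by
      intro l hl
      rcases Finset.mem_insert.1 hl with rfl | hl
      · simp [hij]
      · simp only [Finset.mem_filter, Finset.mem_univ, true_and] at hl ⊢
        exact htrans hl hij
    have hcard := Finset.card_le_card hsub
    rw [Finset.card_insert_of_notMem (by simp [hirrefl i])] at hcard
    simp only [hf]
    omega
  have hinj : Function.Injective (fun j => (⟨f j, hflt j⟩ : Fin m)) := by
    intro i j hij
    by_contra hne
    rcases htotal i j hne with h' | h' <;> have := hmono _ _ h' <;>
      simp only [Fin.mk.injEq] at hij <;> omega
  have hbij : Function.Bijective (fun j => (⟨f j, hflt j⟩ : Fin m)) :=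
    Finite.injective_iff_bijective.1 hinj
  have hcard : (Finset.univ.filter fun j => f j < k).card = k := by
    have h1 : (Finset.univ.filter fun j => f j < k).card =
        (Finset.univ.filter fun v : Fin m => (v : ℕ) < k).card := by
      refine Finset.card_equiv (Equiv.ofBijective _ hbij) fun j => ?_
      simp [Equiv.ofBijective]
    have h2 : (Finset.univ.filter fun v : Fin m => (v : ℕ) < k).card =
        (Finset.range k).card := by
      refine Finset.card_bij' (fun v _ => (v : ℕ)) (fun x hx => ⟨x, ?_⟩) ?_ ?_ ?_ ?_
      · simp at hx; omega
      · intro v hv; simp at hv ⊢; omega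
      · intro x hx; simp at hx ⊢; omega
      · intro v hv; simp
      · intro x hx; simp
    rw [h1, h2, Finset.card_range]
  have hsub2 : (Finset.univ.filter fun j => f j < k) ⊆
      (Finset.univ.filter fun j => (Finset.univ.filter fun i => a i < a j).card < k) := by
    intro j hj
    simp only [Finset.mem_filter, Finset.mem_univ, true_and] at hj ⊢
    have : (Finset.univ.filter fun i => a i < a j) ⊆ (Finset.univ.filter fun i => R i j) := by
      intro i hi
      simp only [Finset.mem_filter, Finset.mem_univ, true_and] at hi ⊢
      exact Or.inl hi
    have := Finset.card_le_card this
    simp only [hf] at hj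
    omega
  calc k = (Finset.univ.filter fun j => f j < k).card := hcard.symm
    _ ≤ _ := Finset.card_le_card hsub2
/-- **Coverage guarantee for conformalized quantile regression
(Algorithm 2, split conformal Quantile-DeepONet regression).**
Given i.i.d. pairs `(X₁,Y₁), …, (Xₙ,Yₙ), (X_test, Y_test)` in `𝒳 × ℝ`, measurable quantile
estimates `t_lo, t_hi : 𝒳 → ℝ`, calibration scores `sᵢ = max(t_lo(Xᵢ) - Yᵢ, Yᵢ - t_hi(Xᵢ))`,
and `q̂` the `⌈(n+1)(1-α)⌉`-th smallest calibration score, we have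
`ℙ(t_lo(X_test) - q̂ ≤ Y_test ≤ t_hi(X_test) + q̂) ≥ 1 - α`. -/
theorem conformal_quantile_regression_coverage
    {Ω : Type*} [MeasurableSpace Ω] (P : Measure Ω) [IsProbabilityMeasure P]
    {𝒳 : Type*} [MeasurableSpace 𝒳]
    (n : ℕ) (hn : 0 < n) (α : ℝ) (hα0 : 0 < α) (hα1 : α < 1)
    (hk : ⌈((n : ℝ) + 1) * (1 - α)⌉ ≤ (n : ℤ))
    (t_lo t_hi : 𝒳 → ℝ) (hlo : Measurable t_lo) (hhi : Measurable t_hi)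
    (Z : Fin (n + 1) → Ω → 𝒳 × ℝ)
    (hZmeas : ∀ i, Measurable (Z i))
    (hindep : iIndepFun Z P)
    (hident : ∀ i j, IdentDistrib (Z i) (Z j) P P)
    (qhat : Ω → ℝ)
    (hqhat : ∀ ω, qhat ω =
      kthSmallest
        (List.ofFn (fun i : Fin n =>
          max (t_lo (Z i.castSucc ω).1 - (Z i.castSucc ω).2)
              ((Z i.castSucc ω).2 - t_hi (Z i.castSucc ω).1)))
        (⌈((n : ℝ) + 1) * (1 - α)⌉.toNat)) :
    ENNReal.ofReal (1 - α) ≤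
      P {ω | t_lo (Z (Fin.last n) ω).1 - qhat ω ≤ (Z (Fin.last n) ω).2 ∧
             (Z (Fin.last n) ω).2 ≤ t_hi (Z (Fin.last n) ω).1 + qhat ω} := by
  -- the score function
  set s : 𝒳 × ℝ → ℝ := fun p => max (t_lo p.1 - p.2) (p.2 - t_hi p.1) with hs_def
  have hs : Measurable s :=
    ((hlo.comp measurable_fst).sub measurable_snd).max
      (measurable_snd.sub (hhi.comp measurable_fst))
  set k : ℕ := (⌈((n : ℝ) + 1) * (1 - α)⌉).toNat with hkdef
  have hceilpos : (0 : ℤ) < ⌈((n : ℝ) + 1) * (1 - α)⌉ :=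
    Int.ceil_pos.2 (mul_pos (by positivity) (by linarith))
  have hk1 : 1 ≤ k := by omega
  have hkn : k ≤ n := by omega
  have hk_real : ((n : ℝ) + 1) * (1 - α) ≤ (k : ℝ) := by
    have h1 := Int.le_ceil (((n : ℝ) + 1) * (1 - α))
    have h2 : ((k : ℤ) : ℝ) = ((⌈((n : ℝ) + 1) * (1 - α)⌉ : ℤ) : ℝ) := by
      rw [hkdef, Int.toNat_of_nonneg hceilpos.le]
    push_cast at h2
    linarith
  -- the common law
  set μ₀ : Measure (𝒳 × ℝ) := P.map (Z (Fin.last n)) with hμ₀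
  haveI : IsProbabilityMeasure μ₀ := Measure.isProbabilityMeasure_map (hZmeas _).aemeasurable
  set π : Measure (Fin (n + 1) → 𝒳 × ℝ) := Measure.pi (fun _ => μ₀) with hπ
  set W : Ω → (Fin (n + 1) → 𝒳 × ℝ) := fun ω i => Z i ω with hW_def
  have hW : Measurable W := measurable_pi_lambda _ hZmeas
  have hlaw : P.map W = π := by
    refine (Measure.pi_eq fun E hE => ?_).symm
    rw [Measure.map_apply hW (MeasurableSet.univ_pi hE)]
    have hpre : W ⁻¹' Set.univ.pi E = ⋂ i, Z i ⁻¹' E i := by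
      ext ω; simp [hW_def, Set.mem_pi]
    rw [hpre, hindep.meas_iInter (fun i => ⟨E i, hE i, rfl⟩)]
    refine Finset.prod_congr rfl fun i _ => ?_
    rw [← Measure.map_apply (hZmeas i) (hE i), (hident i (Fin.last n)).map_eq]
  -- the rank events
  set A : Fin (n + 1) → Set (Fin (n + 1) → 𝒳 × ℝ) := fun j =>
    {v | (Finset.univ.filter fun i => s (v i) < s (v j)).card < k} with hA_def
  have hA : ∀ j, MeasurableSet (A j) := by
    intro j
    have hm : Measurable fun v : Fin (n + 1) → 𝒳 × ℝ =>
        (Finset.univ.filter fun i => s (v i) < s (v j)).card := by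
      simp only [Finset.card_filter]
      exact Finset.measurable_sum _ fun i _ =>
        Measurable.ite (measurableSet_lt (hs.comp (measurable_pi_apply i))
          (hs.comp (measurable_pi_apply j))) measurable_const measurable_const
    exact hm (show MeasurableSet {c : ℕ | c < k} from trivial)
  -- exchangeability: all rank events have the same probability
  have hswap : ∀ j, π (A j) = π (A (Fin.last n)) := by
    intro j
    set σ : Fin (n + 1) ≃ Fin (n + 1) := Equiv.swap j (Fin.last n) with hσ
    set ψ := MeasurableEquiv.piCongrLeft (fun _ : Fin (n + 1) => 𝒳 × ℝ) σ with hψdef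
    have hψ : ∀ (v : Fin (n + 1) → 𝒳 × ℝ) (i : Fin (n + 1)), ψ v (σ i) = v i := by
      intro v i
      rw [hψdef, MeasurableEquiv.coe_piCongrLeft, Equiv.piCongrLeft_apply_apply]
    have hpre : ψ ⁻¹' (A (Fin.last n)) = A j := by
      ext v
      have hlast : s (ψ v (Fin.last n)) = s (v j) := by
        rw [show (Fin.last n) = σ j from (Equiv.swap_apply_left _ _).symm, hψ]
      have hcard : (Finset.univ.filter fun i => s (ψ v i) < s (ψ v (Fin.last n))).card =
          (Finset.univ.filter fun i => s (v i) < s (v j)).card := by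
        refine (Finset.card_equiv σ fun i => ?_).symm
        simp only [Finset.mem_filter, Finset.mem_univ, true_and, hψ, hlast]
      simp only [hA_def, Set.mem_preimage, Set.mem_setOf_eq, hcard]
    have mp := measurePreserving_piCongrLeft (fun _ : Fin (n + 1) => μ₀) σ
    calc π (A j) = π (ψ ⁻¹' A (Fin.last n)) := by rw [hpre]
      _ = π (A (Fin.last n)) := mp.measure_preimage (hA _).nullMeasurableSet
  -- pointwise counting bound
  have hpt : ∀ v : Fin (n + 1) → 𝒳 × ℝ,
      (k : ℝ≥0∞) ≤ ∑ j, (A j).indicator (1 : (Fin (n + 1) → 𝒳 × ℝ) → ℝ≥0∞) v := by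
    intro v
    have hcomb := rank_count_lemma (m := n + 1) (k := k) (by omega) (fun i => s (v i))
    calc (k : ℝ≥0∞) ≤ ((Finset.univ.filter fun j => v ∈ A j).card : ℝ≥0∞) := by
          exact_mod_cast hcomb
      _ = ∑ j, (A j).indicator (1 : (Fin (n + 1) → 𝒳 × ℝ) → ℝ≥0∞) v := by
          rw [Finset.card_filter, Nat.cast_sum]
          refine Finset.sum_congr rfl fun j _ => ?_
          by_cases h : v ∈ A j <;> simp [Set.indicator_apply, h]
  -- summing
  have hsum : (k : ℝ≥0∞) ≤ ∑ j, π (A j) := by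
    have h1 : ∑ j, π (A j) = ∑ j, ∫⁻ v, (A j).indicator 1 v ∂π :=
      Finset.sum_congr rfl fun j _ => (lintegral_indicator_one (hA j)).symm
    rw [h1, ← lintegral_finset_sum _ (fun j _ => (measurable_one.indicator (hA j)))]
    calc (k : ℝ≥0∞) = ∫⁻ _, (k : ℝ≥0∞) ∂π := by simp
      _ ≤ _ := lintegral_mono hpt
  have hmain : (k : ℝ≥0∞) ≤ ((n : ℝ≥0∞) + 1) * π (A (Fin.last n)) := by
    have h2 : ∑ j, π (A j) = ((n : ℝ≥0∞) + 1) * π (A (Fin.last n)) := by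
      rw [Finset.sum_congr rfl fun j _ => hswap j, Finset.sum_const, Finset.card_univ,
        Fintype.card_fin, nsmul_eq_mul]
      push_cast
      ring
    rw [← h2]; exact hsum
  have hdiv : (k : ℝ≥0∞) / ((n : ℝ≥0∞) + 1) ≤ π (A (Fin.last n)) := by
    rw [ENNReal.div_le_iff_le_mul (Or.inl (by simp))
      (Or.inl (by simp [ENNReal.add_ne_top]))]
    rw [mul_comm]
    exact hmain
  have hof : ENNReal.ofReal (1 - α) ≤ (k : ℝ≥0∞) / ((n : ℝ≥0∞) + 1) := by
    have h3 : (1 - α : ℝ) ≤ (k : ℝ) / ((n : ℝ) + 1) := by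
      rw [le_div_iff₀ (by positivity)]
      linarith [hk_real]
    calc ENNReal.ofReal (1 - α) ≤ ENNReal.ofReal ((k : ℝ) / ((n : ℝ) + 1)) :=
          ENNReal.ofReal_le_ofReal h3
      _ = (k : ℝ≥0∞) / ((n : ℝ≥0∞) + 1) := by
          rw [ENNReal.ofReal_div_of_pos (by positivity)]
          congr 1
          · exact ENNReal.ofReal_natCast k
          · rw [ENNReal.ofReal_add (by positivity) zero_le_one]
            simp [ENNReal.ofReal_natCast]
  refine le_trans (le_trans hof hdiv) ?_
  have hAlast : π (A (Fin.last n)) = P (W ⁻¹' A (Fin.last n)) := by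
    rw [← hlaw, Measure.map_apply hW (hA _)]
  rw [hAlast]
  apply measure_mono
  intro ω hω
  have hω' : (Finset.univ.filter fun i : Fin (n + 1) =>
      s (Z i ω) < s (Z (Fin.last n) ω)).card < k := by
    simpa only [hA_def, Set.mem_preimage, Set.mem_setOf_eq, hW_def] using hω
  have hsub : (Finset.univ.filter fun i : Fin n =>
      s (Z i.castSucc ω) < s (Z (Fin.last n) ω)).card ≤
      (Finset.univ.filter fun i : Fin (n + 1) =>
        s (Z i ω) < s (Z (Fin.last n) ω)).card := by
    refine Finset.card_le_card_of_injOn (fun i => i.castSucc) ?_ ?_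
    · intro i hi
      simp only [Finset.mem_coe, Finset.mem_filter, Finset.mem_univ, true_and] at hi ⊢
      exact hi
    · intro a _ b _ h
      exact Fin.castSucc_injective _ h
  have hcnt : (List.ofFn fun i : Fin n => s (Z i.castSucc ω)).countP
      (fun a => decide (a < s (Z (Fin.last n) ω))) < k := by
    rw [countP_ofFn]
    have : (Finset.univ.filter fun i : Fin n =>
        decide (s (Z i.castSucc ω) < s (Z (Fin.last n) ω)) = true) =
        (Finset.univ.filter fun i : Fin n =>
        s (Z i.castSucc ω) < s (Z (Fin.last n) ω)) := by
      simp only [decide_eq_true_eq]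
    rw [this]
    exact lt_of_le_of_lt hsub hω'
  have hlelist : s (Z (Fin.last n) ω) ≤
      kthSmallest (List.ofFn fun i : Fin n => s (Z i.castSucc ω)) k :=
    le_kthSmallest_of_count_lt hk1 (by rw [List.length_ofFn]; exact hkn) hcnt
  have hq : qhat ω = kthSmallest (List.ofFn fun i : Fin n => s (Z i.castSucc ω)) k := by
    rw [hqhat ω]
  have hfinal : s (Z (Fin.last n) ω) ≤ qhat ω := by rw [hq]; exact hlelist
  have hmax : max (t_lo (Z (Fin.last n) ω).1 - (Z (Fin.last n) ω).2)
      ((Z (Fin.last n) ω).2 - t_hi (Z (Fin.last n) ω).1) ≤ qhat ω := by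
    simpa only [hs_def] using hfinal
  constructor
  · have := le_trans (le_max_left _ _) hmax
    linarith
  · have := le_trans (le_max_right _ _) hmax
    linarith
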